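/- Consider the implicit Euler discretization of the coupled system: M(y_n)(y_n − y_{n−1})/τ + F(y_n) = Cᵀ z_n and E(z_n − z_{n−1})/τ + A z_n = B y_n, with y_0 = 0, z_0 = 0, where (E/τ + A) is invertible. Define quadrature weights (ω_n) by the power series expansion Cᵀ((1−ξ)/τ · E + A)^{-1} B = Σ_{n≥0} ω_n ξ^n (valid in a neighborhood of ξ = 0). Then for all n ≥ 1, the y-component satisfies M(y_n)(y_n − y_{n−1})/τ + F(y_n) = Σ_{k=0}^{n} ω_{n−k} y_k. -/

import Mathlib

open Matrix PowerSeries Finset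


lemma coeff_aux_succ (c a b : ℂ) (g : ℕ → ℂ) (n : ℕ) :
    (PowerSeries.coeff (R := ℂ) (n+1)) (((1 - PowerSeries.X) * PowerSeries.C (R := ℂ) c * PowerSeries.C (R := ℂ) a
        + PowerSeries.C (R := ℂ) b) * PowerSeries.mk g) =
      c * a * (g (n+1) - g n) + b * g (n+1) := by
  have : ((1 - PowerSeries.X) * PowerSeries.C (R := ℂ) c * PowerSeries.C (R := ℂ) a + PowerSeries.C (R := ℂ) b) * PowerSeries.mk g
      = PowerSeries.C (R := ℂ) (c*a) * PowerSeries.mk g - PowerSeries.C (R := ℂ) (c*a) * (PowerSeries.X * PowerSeries.mk g) + PowerSeries.C (R := ℂ) b * PowerSeries.mk g := by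
    rw [_root_.map_mul]; ring
  rw [this, map_add, map_sub, coeff_C_mul, coeff_C_mul, coeff_C_mul, coeff_succ_X_mul,
    coeff_mk, coeff_mk]
  ring

lemma coeff_aux_zero (c a b : ℂ) (g : ℕ → ℂ) :
    (PowerSeries.coeff (R := ℂ) 0) (((1 - PowerSeries.X) * PowerSeries.C (R := ℂ) c * PowerSeries.C (R := ℂ) a
        + PowerSeries.C (R := ℂ) b) * PowerSeries.mk g) =
      c * a * g 0 + b * g 0 := by
  have : ((1 - PowerSeries.X) * PowerSeries.C (R := ℂ) c * PowerSeries.C (R := ℂ) a + PowerSeries.C (R := ℂ) b) * PowerSeries.mk g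
      = PowerSeries.C (R := ℂ) (c*a) * PowerSeries.mk g - PowerSeries.C (R := ℂ) (c*a) * (PowerSeries.X * PowerSeries.mk g) + PowerSeries.C (R := ℂ) b * PowerSeries.mk g := by
    rw [_root_.map_mul]; ring
  rw [this, map_add, map_sub, coeff_C_mul, coeff_C_mul, coeff_C_mul]
  simp [coeff_mk]

lemma mulVec_sum' {a b ι : Type*} [Fintype b] (M : Matrix a b ℂ) (s : Finset ι)
    (v : ι → b → ℂ) : M *ᵥ ∑ k ∈ s, v k = ∑ k ∈ s, M *ᵥ v k := by
  exact map_sum M.mulVecLin v s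

/-- implicit Euler discretization of the coupled system is equivalent to the
implicit Euler convolution quadrature method for the reduced problem.  The weights
`ω n = Cᵀ K n B` are the Taylor coefficients of `ξ ↦ Cᵀ((1-ξ)E/τ + A)⁻¹B`, encoded via the
formal power series inverse `K` of `(1-ξ)E/τ + A`. -/
theorem stmt2 {m p : ℕ} (M : (Fin p → ℂ) → Matrix (Fin p) (Fin p) ℂ)
    (F : (Fin p → ℂ) → Fin p → ℂ)
    (E A : Matrix (Fin m) (Fin m) ℂ) (B C : Matrix (Fin m) (Fin p) ℂ)
    (τ : ℝ) (hτ : 0 < τ)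
    (hinv : IsUnit (((τ : ℂ)⁻¹) • E + A))
    (K : ℕ → Matrix (Fin m) (Fin m) ℂ)
    -- K is the formal power series inverse of ((1-ξ)/τ)·E + A
    (hK : (((1 - PowerSeries.X) * PowerSeries.C (R := ℂ) (τ : ℂ)⁻¹) •
            E.map (PowerSeries.C (R := ℂ)) + A.map (PowerSeries.C (R := ℂ))) *
          (Matrix.of fun i j => PowerSeries.mk fun n => K n i j) = 1)
    (ω : ℕ → Matrix (Fin p) (Fin p) ℂ)
    (hω : ∀ n, ω n = Cᵀ * K n * B)
    (y : ℕ → Fin p → ℂ) (z : ℕ → Fin m → ℂ)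
    (hy0 : y 0 = 0) (hz0 : z 0 = 0)
    (h1 : ∀ n : ℕ, 1 ≤ n →
      M (y n) *ᵥ (((τ : ℂ)⁻¹) • (y n - y (n - 1))) + F (y n) = Cᵀ *ᵥ z n)
    (h2 : ∀ n : ℕ, 1 ≤ n →
      ((τ : ℂ)⁻¹) • (E *ᵥ (z n - z (n - 1))) + A *ᵥ z n = B *ᵥ y n) :
    ∀ n : ℕ, 1 ≤ n →
      M (y n) *ᵥ (((τ : ℂ)⁻¹) • (y n - y (n - 1))) + F (y n) =
        ∑ k ∈ range (n + 1), ω (n - k) *ᵥ y k := by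
  have hKentry : ∀ (i l : Fin m) (n : ℕ),
      (PowerSeries.coeff (R := ℂ) n) (∑ j, (((1 - PowerSeries.X) * PowerSeries.C (R := ℂ) (τ : ℂ)⁻¹
          * PowerSeries.C (R := ℂ) (E i j) + PowerSeries.C (R := ℂ) (A i j)) * PowerSeries.mk fun n => K n j l))
        = (PowerSeries.coeff (R := ℂ) n) ((1 : Matrix (Fin m) (Fin m) ℂ⟦X⟧) i l) := by
    intro i l n
    have h := congrFun (congrFun hK i) l
    rw [Matrix.mul_apply] at h
    simp only [Matrix.add_apply, Matrix.smul_apply, Matrix.map_apply, smul_eq_mul,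
      Matrix.of_apply, mul_assoc] at h ⊢
    rw [h]
  have h0 : (((τ:ℂ)⁻¹) • E + A) * K 0 = 1 := by
    ext i l
    have h := hKentry i l 0
    rw [map_sum] at h
    simp only [coeff_aux_zero] at h
    simpa [Matrix.mul_apply, Matrix.add_apply, Matrix.smul_apply, smul_eq_mul, Matrix.one_apply,
      apply_ite, mul_add, add_mul] using h
  have hs : ∀ n, (((τ:ℂ)⁻¹) • E + A) * K (n+1) = ((τ:ℂ)⁻¹) • (E * K n) := by
    intro n
    ext i l
    have h := hKentry i l (n+1)
    rw [map_sum] at h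
    simp only [coeff_aux_succ] at h
    simp only [Matrix.one_apply, apply_ite, _root_.map_one, _root_.map_zero, coeff_one,
      Nat.succ_ne_zero, if_false, ite_self] at h
    have : ∑ j, ((τ:ℂ)⁻¹ * E i j * K (n+1) j l + A i j * K (n+1) j l)
        = ∑ j, (τ:ℂ)⁻¹ * (E i j * K n j l) := by
      rw [← sub_eq_zero, ← Finset.sum_sub_distrib, ← h]
      apply Finset.sum_congr rfl
      intro j _
      ring
    simpa [Matrix.mul_apply, Matrix.add_apply, Matrix.smul_apply, smul_eq_mul, Finset.mul_sum,
      add_mul] using this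
  -- inverse of U
  set U : Matrix (Fin m) (Fin m) ℂ := ((τ:ℂ)⁻¹) • E + A with hU
  have hVU : (↑hinv.unit⁻¹ : Matrix (Fin m) (Fin m) ℂ) * U = 1 := by
    have := hinv.unit.inv_mul
    rwa [hinv.unit_spec] at this
  -- the z formula
  have hz : ∀ n : ℕ, z n = ∑ k ∈ range (n+1), (K (n-k) * B) *ᵥ y k := by
    intro n
    induction n with
    | zero => simp [hz0, hy0]
    | succ n ih =>
      have h2' := h2 (n+1) (by omega)
      simp only [Nat.add_sub_cancel] at h2'
      have key : U *ᵥ z (n+1) = B *ᵥ y (n+1) + ((τ:ℂ)⁻¹) • (E *ᵥ z n) := by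
        rw [hU, Matrix.add_mulVec, Matrix.smul_mulVec, ← h2', Matrix.mulVec_sub]
        module
      have key2 : U *ᵥ (∑ k ∈ range (n+2), (K (n+1-k) * B) *ᵥ y k)
          = B *ᵥ y (n+1) + ((τ:ℂ)⁻¹) • (E *ᵥ z n) := by
        have : U *ᵥ (∑ k ∈ range (n+2), (K (n+1-k) * B) *ᵥ y k)
            = ∑ k ∈ range (n+2), (U * (K (n+1-k) * B)) *ᵥ y k := by
          rw [mulVec_sum']
          simp [Matrix.mulVec_mulVec]
        rw [this, Finset.sum_range_succ]
        have hlast : U * (K (n+1-(n+1)) * B) = B := by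
          rw [Nat.sub_self, ← Matrix.mul_assoc, h0, Matrix.one_mul]
        rw [hlast]
        have hrest : ∑ k ∈ range (n+1), (U * (K (n+1-k) * B)) *ᵥ y k
            = ((τ:ℂ)⁻¹) • (E *ᵥ z n) := by
          have : ∀ k ∈ range (n+1), (U * (K (n+1-k) * B)) *ᵥ y k
              = ((τ:ℂ)⁻¹) • ((E * (K (n-k) * B)) *ᵥ y k) := by
            intro k hk
            have hk' : k ≤ n := by simpa using Nat.lt_succ_iff.mp (Finset.mem_range.mp hk)
            have : n + 1 - k = (n - k) + 1 := by omega
            rw [this, ← Matrix.mul_assoc, hs, Matrix.smul_mul, Matrix.smul_mulVec,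
              Matrix.mul_assoc]
          rw [Finset.sum_congr rfl this, ← Finset.smul_sum, ih]
          congr 1
          rw [mulVec_sum']
          simp [Matrix.mulVec_mulVec, Matrix.mul_assoc]
        rw [hrest, add_comm]
      have : z (n+1) = (↑hinv.unit⁻¹ : Matrix (Fin m) (Fin m) ℂ) *ᵥ (U *ᵥ z (n+1)) := by
        rw [Matrix.mulVec_mulVec, hVU, Matrix.one_mulVec]
      rw [this, key, ← key2, Matrix.mulVec_mulVec, hVU, Matrix.one_mulVec]
  -- conclude
  intro n hn
  rw [h1 n hn, hz n]
  rw [mulVec_sum']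
  apply Finset.sum_congr rfl
  intro k _
  rw [hω, Matrix.mulVec_mulVec, Matrix.mul_assoc]
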